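/- For any S ⊆ ℕ⁺ and completely multiplicative arithmetic functions f, g, for every positive integer n: (f *_S g)(n) = Σ_{d² | n} μ_S(d) f(d) g(d) (f * g)(n/d²), where * is the Dirichlet convolution and μ_S is defined by Σ_{d|n} μ_S(d) = ρ_S(n). -/

import Mathlib

open Finset
open scoped Classical

/-- Characteristic function of `S` (complex-valued). -/
noncomputable def rho (S : Set ℕ) (n : ℕ) : ℂ :=
  if n ∈ S then 1 else 0

/-- The `S`-convolution of arithmetic functions. -/
noncomputable def sconv (S : Set ℕ) (f g : ℕ → ℂ) (n : ℕ) : ℂ :=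
  ∑ d ∈ n.divisors, rho S (Nat.gcd d (n / d)) * f d * g (n / d)

/-- A multiplicative arithmetic function. -/
def IsMult (f : ℕ → ℂ) : Prop :=
  f 1 = 1 ∧ ∀ m n : ℕ, Nat.Coprime m n → f (m * n) = f m * f n

/-- The Möbius function of the set `S`. -/
noncomputable def muS (S : Set ℕ) (n : ℕ) : ℂ :=
  ∑ d ∈ n.divisors, rho S d * (ArithmeticFunction.moebius (n / d) : ℂ)

/-- The Dirichlet convolution. -/
noncomputable def dconv (f g : ℕ → ℂ) (n : ℕ) : ℂ :=
  ∑ d ∈ n.divisors, f d * g (n / d)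

/-- A completely multiplicative arithmetic function. -/
def IsCompMult (f : ℕ → ℂ) : Prop :=
  f 1 = 1 ∧ ∀ m n : ℕ, f (m * n) = f m * f n

/-- `rho` as an arithmetic function (set to 0 at 0). -/
noncomputable def rhoAF (S : Set ℕ) : ArithmeticFunction ℂ :=
  ⟨fun n => if n = 0 then 0 else rho S n, by simp⟩

lemma muS_eq (S : Set ℕ) (m : ℕ) :
    muS S m = (rhoAF S * (ArithmeticFunction.moebius : ArithmeticFunction ℤ)) m := by
  rw [ArithmeticFunction.mul_apply, muS,
    ← Nat.sum_divisorsAntidiagonal (fun x y => rho S x * (ArithmeticFunction.moebius y : ℂ))]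
  refine Finset.sum_congr rfl fun p hp => ?_
  obtain ⟨h, h0⟩ := Nat.mem_divisorsAntidiagonal.mp hp
  have h1 : p.1 ≠ 0 := by rintro h1; rw [h1] at h; simp at h; exact h0 h.symm
  simp [rhoAF, h1, ArithmeticFunction.intCoe_apply]

lemma sum_muS (S : Set ℕ) (m : ℕ) (hm : 0 < m) :
    ∑ e ∈ m.divisors, muS S e = rho S m := by
  have h : ∑ e ∈ m.divisors, muS S e
      = ((rhoAF S * (ArithmeticFunction.moebius : ArithmeticFunction ℤ))
          * (ArithmeticFunction.zeta : ArithmeticFunction ℕ)) m := by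
    rw [ArithmeticFunction.coe_mul_zeta_apply]
    exact Finset.sum_congr rfl fun e _ => muS_eq S e
  rw [h, mul_assoc, ArithmeticFunction.coe_moebius_mul_coe_zeta, mul_one]
  simp [rhoAF, hm.ne']

theorem sconv_eq_dirichlet_sum (S : Set ℕ) (f g : ℕ → ℂ)
    (hf : IsCompMult f) (hg : IsCompMult g) (n : ℕ) (hn : 0 < n) :
    sconv S f g n =
      ∑ d ∈ n.divisors.filter (fun d => d ^ 2 ∣ n),
        muS S d * f d * g d * dconv f g (n / d ^ 2) := by
  rw [sconv]
  have LHS : ∑ d ∈ n.divisors, rho S (Nat.gcd d (n / d)) * f d * g (n / d)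
      = ∑ p ∈ n.divisors.sigma (fun d => (Nat.gcd d (n / d)).divisors),
          muS S p.2 * (f p.1 * g (n / p.1)) := by
    rw [Finset.sum_sigma]
    refine Finset.sum_congr rfl fun d hd => ?_
    obtain ⟨hdvd, -⟩ := Nat.mem_divisors.mp hd
    have hd0 : d ≠ 0 := fun h => by subst h; exact hn.ne' (Nat.eq_zero_of_zero_dvd hdvd)
    dsimp only
    rw [← Finset.sum_mul, sum_muS S _ (Nat.pos_of_ne_zero (by simp [Nat.gcd_eq_zero_iff, hd0]))]
    ring
  rw [LHS]
  have RHS : ∑ d ∈ n.divisors.filter (fun d => d ^ 2 ∣ n),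
        muS S d * f d * g d * dconv f g (n / d ^ 2)
      = ∑ p ∈ (n.divisors.filter (fun d => d ^ 2 ∣ n)).sigma
            (fun e => (n / e ^ 2).divisors),
          muS S p.1 * f p.1 * g p.1 * (f p.2 * g (n / p.1 ^ 2 / p.2)) := by
    rw [Finset.sum_sigma]
    refine Finset.sum_congr rfl fun e _ => ?_
    rw [dconv, Finset.mul_sum]
  rw [RHS]
  refine Finset.sum_nbij' (i := fun p => ⟨p.2, p.1 / p.2⟩) (j := fun p => ⟨p.1 * p.2, p.1⟩)
    ?_ ?_ ?_ ?_ ?_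
  · rintro ⟨d, e⟩ hp
    simp only [Finset.mem_sigma, Nat.mem_divisors, Finset.mem_filter] at hp ⊢
    obtain ⟨⟨hdn, hn0⟩, hegcd, hgcd0⟩ := hp
    have hed : e ∣ d := hegcd.trans (Nat.gcd_dvd_left _ _)
    have hend : e ∣ n / d := hegcd.trans (Nat.gcd_dvd_right _ _)
    have he2 : e ^ 2 ∣ n := by
      rw [pow_two, ← Nat.mul_div_cancel' hdn]
      exact mul_dvd_mul hed hend
    have key : d / e * (n / d / e) = n / e ^ 2 := by
      rw [Nat.div_mul_div_comm hed hend, Nat.mul_div_cancel' hdn, pow_two]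
    refine ⟨⟨⟨hed.trans hdn, hn0⟩, he2⟩, ⟨⟨n / d / e, key.symm⟩, ?_⟩⟩
    have he0 : e ≠ 0 := fun h => by subst h; exact hgcd0 (Nat.eq_zero_of_zero_dvd hegcd)
    exact (Nat.div_pos (Nat.le_of_dvd (Nat.pos_of_ne_zero hn0) he2)
      (Nat.pos_of_ne_zero (pow_ne_zero 2 he0))).ne'
  · rintro ⟨e, a⟩ hp
    simp only [Finset.mem_sigma, Nat.mem_divisors, Finset.mem_filter] at hp ⊢
    obtain ⟨⟨⟨hen, hn0⟩, he2⟩, han, hq0⟩ := hp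
    have hea : e * a ∣ n := by
      have : e ^ 2 * a ∣ n := (Nat.dvd_div_iff_mul_dvd he2).mp han
      exact dvd_trans (by rw [pow_two]; exact ⟨e, by ring⟩) this
    have he0 : e ≠ 0 := fun h => by subst h; exact hn0 (Nat.eq_zero_of_zero_dvd hen)
    have hgcd : e ∣ Nat.gcd (e * a) (n / (e * a)) := by
      refine Nat.dvd_gcd ⟨a, rfl⟩ ?_
      rw [Nat.dvd_div_iff_mul_dvd hea]
      calc e * a * e = e ^ 2 * a := by ring
        _ ∣ n := (Nat.dvd_div_iff_mul_dvd he2).mp han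
    refine ⟨⟨hea, hn0⟩, hgcd, ?_⟩
    have : e * a ≠ 0 := fun h => by
      rcases Nat.mul_eq_zero.mp h with h | h
      · exact he0 h
      · subst h; exact hq0 (Nat.eq_zero_of_zero_dvd han)
    simp [Nat.gcd_eq_zero_iff, this, Nat.div_ne_zero_iff, hn0,
      Nat.le_of_dvd (Nat.pos_of_ne_zero hn0) hea]
  · rintro ⟨d, e⟩ hp
    simp only [Finset.mem_sigma, Nat.mem_divisors] at hp
    obtain ⟨-, hegcd, -⟩ := hp
    have hed : e ∣ d := hegcd.trans (Nat.gcd_dvd_left _ _)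
    simp [Nat.mul_div_cancel' hed]
  · rintro ⟨e, a⟩ hp
    simp only [Finset.mem_sigma, Nat.mem_divisors, Finset.mem_filter] at hp
    obtain ⟨⟨⟨hen, hn0⟩, -⟩, -⟩ := hp
    have he0 : e ≠ 0 := fun h => by subst h; exact hn0 (Nat.eq_zero_of_zero_dvd hen)
    simp [Nat.mul_div_cancel_left _ (Nat.pos_of_ne_zero he0)]
  · rintro ⟨d, e⟩ hp
    simp only [Finset.mem_sigma, Nat.mem_divisors] at hp
    obtain ⟨⟨hdn, hn0⟩, hegcd, hgcd0⟩ := hp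
    have hed : e ∣ d := hegcd.trans (Nat.gcd_dvd_left _ _)
    have hend : e ∣ n / d := hegcd.trans (Nat.gcd_dvd_right _ _)
    have hd0 : d ≠ 0 := fun h => by subst h; exact hn0 (Nat.eq_zero_of_zero_dvd hdn)
    have he0 : e ≠ 0 := fun h => by subst h; exact hgcd0 (by simpa using hegcd)
    have hde0 : 0 < d / e := Nat.div_pos (Nat.le_of_dvd (Nat.pos_of_ne_zero hd0) hed)
      (Nat.pos_of_ne_zero he0)
    have key : d / e * (n / d / e) = n / e ^ 2 := by
      rw [Nat.div_mul_div_comm hed hend, Nat.mul_div_cancel' hdn, pow_two]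
    have hq : n / e ^ 2 / (d / e) = n / d / e := by
      rw [← key, Nat.mul_div_cancel_left _ hde0]
    have hfd : f d = f e * f (d / e) := by
      conv_lhs => rw [← Nat.mul_div_cancel' hed, hf.2]
    have hgd : g (n / d) = g e * g (n / d / e) := by
      conv_lhs => rw [← Nat.mul_div_cancel' hend, hg.2]
    simp only [hq, hfd, hgd]
    ring
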